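/- Let φ¹(t) = 5^{−2} t² (log t)^4 and φ²(t) = 5^{−2} e^{−2+2√(1−t)} (2t + 2√(1−t) − 2)² for t in a sufficiently small right neighborhood of 0, with φ¹(0) = φ²(0) = 0, and for n large define A_n = log( n^{−1/2} · (φ²)^{-1}(n^{−1/2}) / ((φ¹)^{-1}(n^{−1/2}))² ) and B_n = log( (φ²)^{-1}(n^{−1/2}) / n^{−1/2} ), where the inverses are the generalized inverses restricted to small arguments. Then for every γ ∈ ℝ the sequence (|γ A_n − B_n|)_n is unbounded. -/
import Mathlib

set_option maxHeartbeats 1000000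


open Real Set

noncomputable section

/-- `φ¹(t) = 5⁻² t² (log t)⁴` (with `φ¹(0) = 0`, since `Real.log 0 = 0`). -/
def phi1 (t : ℝ) : ℝ := (5 : ℝ) ^ (-2 : ℤ) * t ^ 2 * Real.log t ^ 4

/-- `φ²(t) = 5⁻² e^{-2+2√(1-t)} (2t + 2√(1-t) - 2)²` (with `φ²(0) = 0`). -/
def phi2 (t : ℝ) : ℝ :=
  (5 : ℝ) ^ (-2 : ℤ) * Real.exp (-2 + 2 * Real.sqrt (1 - t)) *
    (2 * t + 2 * Real.sqrt (1 - t) - 2) ^ 2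

/-- The generalized inverse restricted to small arguments:
`φ⁻¹(s) = sup {t ∈ [0,c] : φ t ≤ s}`. -/
def ginvOn (φ : ℝ → ℝ) (c s : ℝ) : ℝ := sSup {t : ℝ | t ∈ Set.Icc 0 c ∧ φ t ≤ s}

/-- The sequence `A_n = log(n^{-1/2} (φ²)⁻¹(n^{-1/2}) / ((φ¹)⁻¹(n^{-1/2}))²)`
(inverses restricted to `[0,c]`). -/
def seqA (c : ℝ) (n : ℕ) : ℝ :=
  Real.log ((Real.sqrt n)⁻¹ * ginvOn phi2 c (Real.sqrt n)⁻¹ /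
    ginvOn phi1 c (Real.sqrt n)⁻¹ ^ 2)

/-- The sequence `B_n = log((φ²)⁻¹(n^{-1/2}) / n^{-1/2})`
(inverse restricted to `[0,c]`). -/
def seqB (c : ℝ) (n : ℕ) : ℝ :=
  Real.log (ginvOn phi2 c (Real.sqrt n)⁻¹ / (Real.sqrt n)⁻¹)

lemma ginv_bdd (φ : ℝ → ℝ) (c s : ℝ) : BddAbove {t : ℝ | t ∈ Set.Icc 0 c ∧ φ t ≤ s} :=
  ⟨c, fun t ht => ht.1.2⟩

lemma ginv_lb {φ : ℝ → ℝ} {c s a : ℝ} (ha : a ∈ Set.Icc 0 c) (hφa : φ a ≤ s) :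
    a ≤ ginvOn φ c s :=
  le_csSup (ginv_bdd φ c s) ⟨ha, hφa⟩

lemma ginv_ub {φ : ℝ → ℝ} {c s b : ℝ} (hm : StrictMonoOn φ (Set.Icc 0 c))
    (hc : 0 ≤ c) (hb : b ∈ Set.Icc 0 c) (hφb : s < φ b) (h0 : φ 0 ≤ s) :
    ginvOn φ c s ≤ b := by
  refine csSup_le ⟨0, ?_⟩ ?_
  · exact ⟨Set.left_mem_Icc.2 hc, h0⟩
  intro t ht
  by_contra hlt
  push_neg at hlt
  have := hm hb ht.1 hlt
  have := ht.2
  linarith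

lemma phi1_zero : phi1 0 = 0 := by simp [phi1]
lemma phi2_zero : phi2 0 = 0 := by simp [phi2]

lemma sqrt_one_sub_ge {t : ℝ} (ht0 : 0 ≤ t) (ht1 : t ≤ 1) : 1 - t ≤ Real.sqrt (1 - t) := by
  nlinarith [Real.sq_sqrt (by linarith : (0:ℝ) ≤ 1 - t), Real.sqrt_nonneg (1 - t),
    Real.sqrt_le_one.2 (by linarith : (1:ℝ) - t ≤ 1)]

lemma E_bounds {t : ℝ} (ht0 : 0 ≤ t) (ht1 : t ≤ 1) :
    0 ≤ 2 * t + 2 * Real.sqrt (1 - t) - 2 ∧ 2 * t + 2 * Real.sqrt (1 - t) - 2 ≤ t := by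
  have h1 := sqrt_one_sub_ge ht0 ht1
  have h2 : Real.sqrt (1 - t) ≤ 1 := Real.sqrt_le_one.2 (by linarith)
  have h3 := Real.sq_sqrt (by linarith : (0:ℝ) ≤ 1 - t)
  have h4 := Real.sqrt_nonneg (1 - t)
  constructor
  · linarith
  · nlinarith

lemma phi2_le {t : ℝ} (ht0 : 0 ≤ t) (ht1 : t ≤ 1) : phi2 t ≤ t ^ 2 / 25 := by
  obtain ⟨hE0, hE1⟩ := E_bounds ht0 ht1
  have h2 : Real.sqrt (1 - t) ≤ 1 := Real.sqrt_le_one.2 (by linarith)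
  have hexp : Real.exp (-2 + 2 * Real.sqrt (1 - t)) ≤ 1 :=
    Real.exp_le_one_iff.2 (by linarith)
  have hEsq : (2 * t + 2 * Real.sqrt (1 - t) - 2) ^ 2 ≤ t ^ 2 := by nlinarith
  have key : Real.exp (-2 + 2 * Real.sqrt (1 - t)) *
      (2 * t + 2 * Real.sqrt (1 - t) - 2) ^ 2 ≤ 1 * t ^ 2 :=
    mul_le_mul hexp hEsq (sq_nonneg _) zero_le_one
  unfold phi2
  rw [show ((5:ℝ) ^ (-2 : ℤ)) = 1/25 by norm_num, mul_assoc]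
  linarith

lemma phi2_ge {t : ℝ} (ht0 : 0 ≤ t) (ht1 : t ≤ 1/2) : 4 * t ^ 2 / 675 ≤ phi2 t := by
  have h3 := Real.sq_sqrt (by linarith : (0:ℝ) ≤ 1 - t)
  have h4 := Real.sqrt_nonneg (1 - t)
  have h2 : Real.sqrt (1 - t) ≤ 1 := Real.sqrt_le_one.2 (by linarith)
  have hr : (7:ℝ)/10 ≤ Real.sqrt (1 - t) := by
    rw [show (7:ℝ)/10 = Real.sqrt ((7/10)^2) from (Real.sqrt_sq (by norm_num)).symm]
    apply Real.sqrt_le_sqrt; nlinarith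
  have hE : 2 * t / 3 ≤ 2 * t + 2 * Real.sqrt (1 - t) - 2 := by nlinarith
  have hE0 : 0 ≤ 2 * t + 2 * Real.sqrt (1 - t) - 2 := (E_bounds ht0 (by linarith)).1
  have hexp : Real.exp (-1 : ℝ) ≤ Real.exp (-2 + 2 * Real.sqrt (1 - t)) := by
    apply Real.exp_le_exp.2
    nlinarith [sqrt_one_sub_ge ht0 (by linarith : t ≤ 1)]
  have hexp3 : (1:ℝ)/3 ≤ Real.exp (-1 : ℝ) := by
    rw [Real.exp_neg]
    have h1 : Real.exp 1 * (Real.exp 1)⁻¹ = 1 := mul_inv_cancel₀ (ne_of_gt (Real.exp_pos 1))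
    nlinarith [Real.exp_one_lt_d9, Real.exp_pos 1, inv_pos.2 (Real.exp_pos 1)]
  have hEsq : (2 * t / 3) ^ 2 ≤ (2 * t + 2 * Real.sqrt (1 - t) - 2) ^ 2 :=
    sq_le_sq' (by linarith) hE
  have key : (1/3 : ℝ) * ((2*t/3)^2) ≤ Real.exp (-2 + 2 * Real.sqrt (1 - t)) *
      (2 * t + 2 * Real.sqrt (1 - t) - 2) ^ 2 :=
    mul_le_mul (le_trans hexp3 hexp) hEsq (sq_nonneg _) (le_of_lt (Real.exp_pos _))
  unfold phi2
  rw [show ((5:ℝ) ^ (-2 : ℤ)) = 1/25 by norm_num, mul_assoc]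
  nlinarith

lemma log_le_half {L : ℝ} (hL : 1 ≤ L) : Real.log L ≤ L / 2 := by
  have h1 : Real.log (Real.sqrt L) ≤ Real.sqrt L - 1 :=
    Real.log_le_sub_one_of_pos (Real.sqrt_pos.2 (by linarith))
  have h2 : Real.log (Real.sqrt L) = Real.log L / 2 := Real.log_sqrt (by linarith)
  nlinarith [Real.sq_sqrt (by linarith : (0:ℝ) ≤ L), Real.sqrt_nonneg L,
    sq_nonneg (Real.sqrt L - 2)]

lemma log_le_two_sqrt {L : ℝ} (hL : 1 ≤ L) : Real.log L ≤ 2 * Real.sqrt L := by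
  have h1 : Real.log (Real.sqrt L) ≤ Real.sqrt L - 1 :=
    Real.log_le_sub_one_of_pos (Real.sqrt_pos.2 (by linarith))
  have h2 : Real.log (Real.sqrt L) = Real.log L / 2 := Real.log_sqrt (by linarith)
  linarith

lemma master (c : ℝ) (hc0 : 0 < c) (hc1 : c < 1)
    (h1m : StrictMonoOn phi1 (Set.Icc 0 c)) (h2m : StrictMonoOn phi2 (Set.Icc 0 c)) :
    ∃ T0 : ℝ, ∀ n : ℕ, T0 ≤ Real.log (Real.sqrt n) →
      20 ≤ Real.log (Real.sqrt n) ∧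
      |seqA c n + Real.log (Real.sqrt n) / 2 -
          4 * Real.log (Real.log (Real.sqrt n))| ≤ 9 ∧
      |seqB c n - Real.log (Real.sqrt n) / 2 - 2| ≤ 1 := by
  refine ⟨max 20 (max (2 * Real.log (100 / c)) (2 * Real.log 200)), fun n hn => ?_⟩
  set L := Real.log (Real.sqrt n) with hLdef
  have hL20 : 20 ≤ L := le_trans (le_max_left _ _) hn
  -- exp(-(L/2)) small
  have hc2 : Real.exp (-(L/2)) ≤ c / 100 := by
    have h1 : 2 * Real.log (100 / c) ≤ L := le_trans (le_trans (le_max_left _ _) (le_max_right _ _)) hn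
    have h2 : Real.exp (-(L/2)) ≤ Real.exp (Real.log (c/100)) := by
      apply Real.exp_le_exp.2
      rw [show c/100 = (100/c)⁻¹ by rw [inv_div], Real.log_inv]
      linarith
    rwa [Real.exp_log (by positivity)] at h2
  have hc3 : Real.exp (-(L/2)) ≤ 1 / 200 := by
    have h1 : 2 * Real.log 200 ≤ L := le_trans (le_trans (le_max_right _ _) (le_max_right _ _)) hn
    have h2 : Real.exp (-(L/2)) ≤ Real.exp (Real.log (1/200)) := by
      apply Real.exp_le_exp.2
      rw [show (1:ℝ)/200 = (200:ℝ)⁻¹ by norm_num, Real.log_inv]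
      linarith
    rwa [Real.exp_log (by norm_num)] at h2
  -- positivity of sqrt n
  have hsn : (0:ℝ) < Real.sqrt n := by
    rcases lt_or_eq_of_le (Real.sqrt_nonneg (n:ℝ)) with h | h
    · exact h
    · exfalso; rw [hLdef, ← h, Real.log_zero] at hL20; linarith
  set s := (Real.sqrt (n:ℝ))⁻¹ with hsdef
  have hs0 : (0:ℝ) < s := by positivity
  have hlogs : Real.log s = -L := by rw [hsdef, Real.log_inv]
  set e := Real.exp (-(L/2)) with hedef
  have he0 : (0:ℝ) < e := Real.exp_pos _
  have he2 : e ^ 2 = s := by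
    have h1 : e ^ 2 = Real.exp (-L) := by
      rw [hedef, pow_two, ← Real.exp_add]; ring_nf
    rw [h1, ← hlogs, Real.exp_log hs0]
  have hLpos : (0:ℝ) < L := by linarith
  have hLne : L ≠ 0 := ne_of_gt hLpos
  have hL2 : (1:ℝ) ≤ L ^ 2 := by nlinarith
  have hlogL : (0:ℝ) < Real.log L := Real.log_pos (by linarith)
  have hlogLhalf : Real.log L ≤ L / 2 := log_le_half (by linarith)
  -- numeric log bounds
  have hexp1 := Real.exp_one_lt_d9
  have hexp1' := Real.exp_one_gt_d9
  have hlog5 : 1 ≤ Real.log 5 := by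
    rw [Real.le_log_iff_exp_le (by norm_num : (0:ℝ) < 5)]
    linarith
  have hlog19 : Real.log 19 ≤ 3 := by
    rw [Real.log_le_iff_le_exp (by norm_num : (0:ℝ) < 19)]
    have h3 : Real.exp 3 = (Real.exp 1) ^ 3 := by
      rw [← Real.exp_nat_mul]; norm_num
    have h4 : (2.71:ℝ) ^ 3 ≤ (Real.exp 1) ^ 3 :=
      pow_le_pow_left₀ (by norm_num) (by linarith) 3
    have h5 : (19:ℝ) ≤ (2.71:ℝ) ^ 3 := by norm_num
    linarith
  have hlog81 : Real.log 81 ≤ 5 := by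
    rw [Real.log_le_iff_le_exp (by norm_num : (0:ℝ) < 81)]
    have h3 : Real.exp 5 = (Real.exp 1) ^ 5 := by
      rw [← Real.exp_nat_mul]; norm_num
    have h4 : (2.71:ℝ) ^ 5 ≤ (Real.exp 1) ^ 5 :=
      pow_le_pow_left₀ (by norm_num) (by linarith) 5
    have h5 : (81:ℝ) ≤ (2.71:ℝ) ^ 5 := by norm_num
    linarith
  -- the four test points
  set a1 := e / L ^ 2 with ha1def
  set b1 := 81 * e / L ^ 2 with hb1def
  set a2 := 5 * e with ha2def
  set b2 := 19 * e with hb2def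
  have ha1mem : a1 ∈ Set.Icc 0 c := by
    constructor
    · positivity
    · calc a1 ≤ e := by
            rw [ha1def]; exact div_le_self he0.le hL2
        _ ≤ c / 100 := hc2
        _ ≤ c := by linarith
  have hb1mem : b1 ∈ Set.Icc 0 c := by
    constructor
    · positivity
    · have : b1 ≤ 81 * e := by
        rw [hb1def, mul_div_assoc]
        nlinarith [div_le_self he0.le hL2]
      nlinarith
  have ha2mem : a2 ∈ Set.Icc 0 c := by
    constructor
    · positivity
    · rw [ha2def]; linarith
  have hb2mem : b2 ∈ Set.Icc 0 c := by
    constructor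
    · positivity
    · rw [hb2def]; linarith
  have hb2half : b2 ≤ 1/2 := by rw [hb2def]; linarith
  -- phi2 bounds at a2, b2
  have hphi2a2 : phi2 a2 ≤ s := by
    have h := phi2_le (t := a2) (by positivity) (by rw [ha2def]; linarith)
    calc phi2 a2 ≤ a2 ^ 2 / 25 := h
      _ = e ^ 2 := by rw [ha2def]; ring
      _ = s := he2
  have hphi2b2 : s < phi2 b2 := by
    have h := phi2_ge (t := b2) (by positivity) hb2half
    have h2 : (4:ℝ) * b2 ^ 2 / 675 = 1444 / 675 * e ^ 2 := by rw [hb2def]; ring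
    have h3 : (0:ℝ) < e ^ 2 := by positivity
    rw [← he2]
    linarith
  -- phi1 bounds at a1, b1
  have hloga1 : Real.log a1 = -(L/2) - 2 * Real.log L := by
    rw [ha1def, Real.log_div (ne_of_gt he0) (pow_ne_zero 2 hLne), Real.log_exp,
      Real.log_pow]
    push_cast; ring
  have hlogb1 : Real.log b1 = Real.log 81 - L/2 - 2 * Real.log L := by
    rw [hb1def, Real.log_div (by positivity) (pow_ne_zero 2 hLne),
      Real.log_mul (by norm_num) (ne_of_gt he0), Real.log_exp, Real.log_pow]
    push_cast; ring
  have hphi1a1 : phi1 a1 ≤ s := by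
    rw [phi1, show ((5:ℝ) ^ (-2 : ℤ)) = 1/25 by norm_num]
    set X := L/2 + 2 * Real.log L with hXdef
    have hX0 : 0 ≤ X := by positivity
    have hlogX : Real.log a1 ^ 4 = X ^ 4 := by
      rw [hloga1, show -(L/2) - 2 * Real.log L = -X by rw [hXdef]; ring]
      rw [Even.neg_pow (by decide)]
    rw [hlogX]
    have hX4 : X ^ 4 ≤ (3 * L / 2) ^ 4 := by
      apply pow_le_pow_left₀ hX0
      linarith
    have ha1sq : a1 ^ 2 = e ^ 2 / (L ^ 2) ^ 2 := by rw [ha1def, div_pow]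
    have hL4 : (0:ℝ) ≤ (L ^ 2) ^ 2 := by positivity
    have heq : (3 * L / 2) ^ 4 = 81 / 16 * (L ^ 2) ^ 2 := by ring
    have hX4' : X ^ 4 ≤ 25 * (L ^ 2) ^ 2 := by
      calc X ^ 4 ≤ (3 * L / 2) ^ 4 := hX4
        _ = 81 / 16 * (L ^ 2) ^ 2 := heq
        _ ≤ 25 * (L ^ 2) ^ 2 := by linarith
    calc (1:ℝ)/25 * a1 ^ 2 * X ^ 4 ≤ 1/25 * (e ^ 2 / (L ^ 2) ^ 2) * (25 * (L ^ 2) ^ 2) := by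
          rw [ha1sq]
          apply mul_le_mul_of_nonneg_left hX4' (by positivity)
      _ = e ^ 2 := by field_simp
      _ = s := he2
  have hphi1b1 : s < phi1 b1 := by
    rw [phi1, show ((5:ℝ) ^ (-2 : ℤ)) = 1/25 by norm_num]
    set Y := L/2 + 2 * Real.log L - Real.log 81 with hYdef
    have hY4 : L/4 ≤ Y := by rw [hYdef]; linarith
    have hlogY : Real.log b1 ^ 4 = Y ^ 4 := by
      rw [hlogb1, show Real.log 81 - L/2 - 2 * Real.log L = -Y by rw [hYdef]; ring]
      rw [Even.neg_pow (by decide)]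
    rw [hlogY]
    have hY40 : (L/4) ^ 4 ≤ Y ^ 4 := pow_le_pow_left₀ (by linarith) hY4 4
    have hb1sq : b1 ^ 2 = 6561 * e ^ 2 / (L ^ 2) ^ 2 := by
      rw [hb1def, div_pow]; ring
    have step1 : 1/25 * b1 ^ 2 * (L/4) ^ 4 ≤ 1/25 * b1 ^ 2 * Y ^ 4 :=
      mul_le_mul_of_nonneg_left hY40 (by positivity)
    have step2 : 1/25 * b1 ^ 2 * (L/4) ^ 4 = 6561/6400 * e ^ 2 := by
      rw [hb1sq]
      field_simp
      ring
    have he2pos : (0:ℝ) < e ^ 2 := by positivity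
    rw [← he2]
    linarith
  -- bounds on the generalized inverses
  set g1 := ginvOn phi1 c s with hg1def
  set g2 := ginvOn phi2 c s with hg2def
  have hg1l : a1 ≤ g1 := ginv_lb ha1mem hphi1a1
  have hg1u : g1 ≤ b1 := ginv_ub h1m hc0.le hb1mem hphi1b1 (by rw [phi1_zero]; exact hs0.le)
  have hg2l : a2 ≤ g2 := ginv_lb ha2mem hphi2a2
  have hg2u : g2 ≤ b2 := ginv_ub h2m hc0.le hb2mem hphi2b2 (by rw [phi2_zero]; exact hs0.le)
  have ha1pos : (0:ℝ) < a1 := by rw [ha1def]; positivity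
  have ha2pos : (0:ℝ) < a2 := by rw [ha2def]; positivity
  have hg1pos : (0:ℝ) < g1 := lt_of_lt_of_le ha1pos hg1l
  have hg2pos : (0:ℝ) < g2 := lt_of_lt_of_le ha2pos hg2l
  -- logs of inverses
  have hlg1l : Real.log a1 ≤ Real.log g1 := Real.log_le_log ha1pos hg1l
  have hlg1u : Real.log g1 ≤ Real.log b1 := Real.log_le_log hg1pos hg1u
  have hlg2l : Real.log a2 ≤ Real.log g2 := Real.log_le_log ha2pos hg2l
  have hlg2u : Real.log g2 ≤ Real.log b2 := Real.log_le_log hg2pos hg2u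
  have hloga2 : Real.log a2 = Real.log 5 - L/2 := by
    rw [ha2def, Real.log_mul (by norm_num) (ne_of_gt he0), Real.log_exp]; ring
  have hlogb2 : Real.log b2 = Real.log 19 - L/2 := by
    rw [hb2def, Real.log_mul (by norm_num) (ne_of_gt he0), Real.log_exp]; ring
  -- formulas for seqA, seqB
  have hA : seqA c n = Real.log (s * g2 / g1 ^ 2) := rfl
  have hB : seqB c n = Real.log (g2 / s) := rfl
  have hA' : seqA c n = Real.log s + Real.log g2 - 2 * Real.log g1 := by
    rw [hA, Real.log_div (ne_of_gt (by positivity)) (ne_of_gt (by positivity)),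
      Real.log_mul (ne_of_gt hs0) (ne_of_gt hg2pos), Real.log_pow]
    push_cast; ring
  have hB' : seqB c n = Real.log g2 - Real.log s := by
    rw [hB, Real.log_div (ne_of_gt hg2pos) (ne_of_gt hs0)]
  refine ⟨hL20, ?_, ?_⟩
  · rw [hA', hlogs, abs_le]
    constructor
    · rw [hloga1] at hlg1l; rw [hlogb1] at hlg1u
      rw [hloga2] at hlg2l
      linarith
    · rw [hloga1] at hlg1l; rw [hlogb1] at hlg1u
      rw [hlogb2] at hlg2u
      linarith
  · rw [hB', hlogs, abs_le]
    constructor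
    · rw [hloga2] at hlg2l; linarith
    · rw [hlogb2] at hlg2u; linarith

lemma exists_n (N : ℕ) (T : ℝ) : ∃ n : ℕ, N ≤ n ∧ T ≤ Real.log (Real.sqrt n) := by
  refine ⟨max N (⌈Real.exp (2 * T)⌉₊ + 1), le_max_left _ _, ?_⟩
  have h1 : Real.exp (2 * T) ≤ ((max N (⌈Real.exp (2 * T)⌉₊ + 1) : ℕ) : ℝ) := by
    calc Real.exp (2 * T) ≤ (⌈Real.exp (2 * T)⌉₊ : ℝ) := Nat.le_ceil _
      _ ≤ ((⌈Real.exp (2 * T)⌉₊ + 1 : ℕ) : ℝ) := by push_cast; linarith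
      _ ≤ _ := by exact_mod_cast Nat.cast_le.2 (le_max_right _ _)
  have h2 : Real.exp T ≤ Real.sqrt (max N (⌈Real.exp (2 * T)⌉₊ + 1) : ℕ) := by
    have : Real.exp T = Real.sqrt (Real.exp (2 * T)) := by
      rw [show (2:ℝ) * T = T + T by ring, Real.exp_add, Real.sqrt_mul_self (Real.exp_pos T).le]
    rw [this]
    exact Real.sqrt_le_sqrt h1
  calc T = Real.log (Real.exp T) := (Real.log_exp T).symm
    _ ≤ Real.log (Real.sqrt (max N (⌈Real.exp (2 * T)⌉₊ + 1) : ℕ)) :=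
      Real.log_le_log (Real.exp_pos T) h2


/-- For every `γ ∈ ℝ` the sequence `(|γ A_n - B_n|)` (for large `n`) is unbounded,
where the inverses of `φ¹, φ²` are restricted to any interval `[0,c]` on which these
functions are strictly increasing and continuous. -/
theorem statement16 (c : ℝ) (hc0 : 0 < c) (hc1 : c < 1)
    (h1m : StrictMonoOn phi1 (Set.Icc 0 c)) (h1c : ContinuousOn phi1 (Set.Icc 0 c))
    (h2m : StrictMonoOn phi2 (Set.Icc 0 c)) (h2c : ContinuousOn phi2 (Set.Icc 0 c)) :
    ∀ γ : ℝ, ∀ M : ℝ, ∀ N : ℕ, ∃ n : ℕ, N ≤ n ∧ M < |γ * seqA c n - seqB c n| := by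
  intro γ M N
  obtain ⟨T0, hT0⟩ := master c hc0 hc1 h1m h2m
  by_cases hγ : γ = -1
  · obtain ⟨n, hnN, hnL⟩ := exists_n N (max T0 (Real.exp ((M + 9) / 4)))
    obtain ⟨hL20, hA, hB⟩ := hT0 n (le_trans (le_max_left _ _) hnL)
    set L := Real.log (Real.sqrt n) with hLdef
    set lL := Real.log L with hlLdef
    have hexpL : Real.exp ((M + 9) / 4) ≤ L := le_trans (le_max_right _ _) hnL
    have hlLb : (M + 9) / 4 ≤ lL := by
      calc (M + 9) / 4 = Real.log (Real.exp ((M + 9) / 4)) := (Real.log_exp _).symm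
        _ ≤ lL := Real.log_le_log (Real.exp_pos _) hexpL
    rw [abs_le] at hA hB
    refine ⟨n, hnN, ?_⟩
    have key : γ * seqA c n - seqB c n = -(seqA c n + seqB c n) := by rw [hγ]; ring
    rw [key, abs_neg]
    calc M < 4 * ((M + 9) / 4) - 8 := by linarith
      _ ≤ 4 * lL - 8 := by linarith
      _ ≤ seqA c n + seqB c n := by linarith [hA.1, hB.1]
      _ ≤ |seqA c n + seqB c n| := le_abs_self _
  · have hδ : 0 < |γ + 1| := abs_pos.2 (fun h => hγ (by linarith))
    set δ := |γ + 1| with hδdef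
    obtain ⟨n, hnN, hnL⟩ :=
      exists_n N (max T0 (max ((32 * |γ| / δ) ^ 2) (4 * (M + 9 * |γ| + 4) / δ)))
    obtain ⟨hL20, hA, hB⟩ := hT0 n (le_trans (le_max_left _ _) hnL)
    set L := Real.log (Real.sqrt n) with hLdef
    set lL := Real.log L with hlLdef
    refine ⟨n, hnN, ?_⟩
    have hLsq : (32 * |γ| / δ) ^ 2 ≤ L :=
      le_trans (le_trans (le_max_left _ _) (le_max_right _ _)) hnL
    have hLmain : 4 * (M + 9 * |γ| + 4) / δ ≤ L :=
      le_trans (le_trans (le_max_right _ _) (le_max_right _ _)) hnL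
    have hsqL : 32 * |γ| / δ ≤ Real.sqrt L := by
      rw [show 32 * |γ| / δ = Real.sqrt ((32 * |γ| / δ) ^ 2) from
        (Real.sqrt_sq (by positivity)).symm]
      exact Real.sqrt_le_sqrt hLsq
    have hlL2 : lL ≤ 2 * Real.sqrt L := log_le_two_sqrt (by linarith)
    have hlL0 : 0 ≤ lL := Real.log_nonneg (by linarith)
    set P := seqA c n + L / 2 - 4 * lL with hP
    set Q := seqB c n - L / 2 - 2 with hQ
    have hkey : γ * seqA c n - seqB c n = γ * P + γ * (4 * lL) - Q - 2 - (γ + 1) * (L / 2) := by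
      rw [hP, hQ]; ring
    have h1 : |(γ + 1) * (L / 2)| - |γ * P + γ * (4 * lL) - Q - 2| ≤
        |γ * seqA c n - seqB c n| := by
      have h := abs_sub_abs_le_abs_sub ((γ + 1) * (L / 2)) (γ * P + γ * (4 * lL) - Q - 2)
      rw [show (γ + 1) * (L / 2) - (γ * P + γ * (4 * lL) - Q - 2) =
        -(γ * seqA c n - seqB c n) by rw [hkey]; ring, abs_neg] at h
      exact h
    have habs1 : |(γ + 1) * (L / 2)| = δ * (L / 2) := by
      rw [abs_mul, abs_of_nonneg (by linarith : (0:ℝ) ≤ L / 2)]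
    have hPb : |γ * P| ≤ |γ| * 9 := by
      rw [abs_mul]; exact mul_le_mul_of_nonneg_left hA (abs_nonneg γ)
    have hlb : |γ * (4 * lL)| = |γ| * (4 * lL) := by
      rw [abs_mul, abs_of_nonneg (show (0:ℝ) ≤ 4 * lL by linarith)]
    have hR : |γ * P + γ * (4 * lL) - Q - 2| ≤ |γ| * 9 + |γ| * (4 * lL) + 3 := by
      have t1 : γ * P ≤ |γ| * 9 := le_trans (le_abs_self _) hPb
      have t2 : -(|γ| * 9) ≤ γ * P := le_trans (neg_le_neg hPb) (neg_abs_le _)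
      have t3 : γ * (4 * lL) ≤ |γ| * (4 * lL) := by rw [← hlb]; exact le_abs_self _
      have t4 : -(|γ| * (4 * lL)) ≤ γ * (4 * lL) := by rw [← hlb]; exact neg_abs_le _
      have t5 := abs_le.1 hB
      rw [abs_le]; constructor <;> [linarith [t2, t4, t5.2]; linarith [t1, t3, t5.1]]
    have hmul : |γ| * (4 * lL) ≤ δ * (L / 4) := by
      have s1 : |γ| * (4 * lL) ≤ |γ| * (8 * Real.sqrt L) :=
        mul_le_mul_of_nonneg_left (by linarith) (abs_nonneg γ)
      have s2 : Real.sqrt L * Real.sqrt L = L := Real.mul_self_sqrt (by linarith)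
      have u1 : 32 * |γ| ≤ Real.sqrt L * δ := (div_le_iff₀ hδ).1 hsqL
      have u2 : 32 * |γ| * Real.sqrt L ≤ Real.sqrt L * δ * Real.sqrt L :=
        mul_le_mul_of_nonneg_right u1 (Real.sqrt_nonneg L)
      have u3 : Real.sqrt L * δ * Real.sqrt L = δ * L := by
        rw [mul_comm (Real.sqrt L) δ, mul_assoc, s2]
      linarith [s1, u2, u3]
    have hmain : 4 * (M + 9 * |γ| + 4) ≤ δ * L := by
      rw [div_le_iff₀ hδ] at hLmain; linarith
    rw [habs1] at h1
    linarith [h1, hR]
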